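/- The five matrices A, B, C, D, E generate the full symplectic group Sp(4,ℤ); that is, the subgroup of Sp(4,ℤ) generated by {A, B, C, D, E} is all of Sp(4,ℤ). -/

import Mathlib

open Matrix

namespace GenusTwo

def A : Matrix (Fin 4) (Fin 4) ℤ := !![1,0,0,0; 0,1,0,0; 1,0,1,0; 0,0,0,1]
def B : Matrix (Fin 4) (Fin 4) ℤ := !![1,0,-1,1; 0,1,1,-1; 0,0,1,0; 0,0,0,1]
def C : Matrix (Fin 4) (Fin 4) ℤ := !![1,0,0,0; 0,1,0,0; 0,0,1,0; 0,1,0,1]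
def D : Matrix (Fin 4) (Fin 4) ℤ := !![1,0,0,0; 0,1,0,-1; 0,0,1,0; 0,0,0,1]
def E : Matrix (Fin 4) (Fin 4) ℤ := !![1,0,0,0; 0,1,0,0; 1,1,1,0; 1,1,0,1]

/-- View a `4 × 4` integer matrix as a matrix indexed by `Fin 2 ⊕ Fin 2`, so that it can be
compared with elements of Mathlib's symplectic group `Matrix.symplecticGroup (Fin 2) ℤ`. -/
def r (M : Matrix (Fin 4) (Fin 4) ℤ) : Matrix (Fin 2 ⊕ Fin 2) (Fin 2 ⊕ Fin 2) ℤ :=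
  Matrix.reindex finSumFinEquiv.symm finSumFinEquiv.symm M

/-- The subgroup `Γ` of `Sp(4,ℤ)` generated by the matrices `A`, `B`, `C`, `D`. -/
def Γ : Subgroup (Matrix.symplecticGroup (Fin 2) ℤ) :=
  Subgroup.closure {g | (g : Matrix (Fin 2 ⊕ Fin 2) (Fin 2 ⊕ Fin 2) ℤ) = r A ∨
    (g : Matrix (Fin 2 ⊕ Fin 2) (Fin 2 ⊕ Fin 2) ℤ) = r B ∨
    (g : Matrix (Fin 2 ⊕ Fin 2) (Fin 2 ⊕ Fin 2) ℤ) = r C ∨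
    (g : Matrix (Fin 2 ⊕ Fin 2) (Fin 2 ⊕ Fin 2) ℤ) = r D}

/-- The entrywise reduction homomorphism `Sp(4,ℤ) → Sp(4,ℤ/2ℤ)`. -/
def sred : Matrix.symplecticGroup (Fin 2) ℤ →* Matrix.symplecticGroup (Fin 2) (ZMod 2) where
  toFun g := ⟨(Int.castRingHom (ZMod 2)).mapMatrix
      (g : Matrix (Fin 2 ⊕ Fin 2) (Fin 2 ⊕ Fin 2) ℤ), by
    rw [SymplecticGroup.mem_iff]
    have hg := SymplecticGroup.mem_iff.mp g.2
    have hneg : ((-1 : Matrix (Fin 2) (Fin 2) ℤ).map fun x => ((x : ZMod 2))) = -1 := by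
      ext i j
      simp [Matrix.map_apply, Matrix.one_apply, apply_ite (Int.cast : ℤ → ZMod 2)]
    have hJ : (Int.castRingHom (ZMod 2)).mapMatrix (Matrix.J (Fin 2) ℤ) =
        Matrix.J (Fin 2) (ZMod 2) := by
      rw [RingHom.mapMatrix_apply]
      unfold Matrix.J
      rw [Matrix.fromBlocks_map]
      simp [hneg]
    rw [← hJ, RingHom.mapMatrix_apply, RingHom.mapMatrix_apply, ← Matrix.transpose_map,
      ← Matrix.map_mul, ← Matrix.map_mul, hg]⟩
  map_one' := by
    apply Subtype.ext
    simp
  map_mul' g h := by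
    apply Subtype.ext
    show ((g : Matrix (Fin 2 ⊕ Fin 2) (Fin 2 ⊕ Fin 2) ℤ) *
        (h : Matrix (Fin 2 ⊕ Fin 2) (Fin 2 ⊕ Fin 2) ℤ)).map (Int.castRingHom (ZMod 2)) = _
    rw [Matrix.map_mul]
    rfl

/-- The principal congruence subgroup `Γ(2)`: the kernel of the entrywise reduction
homomorphism `Sp(4,ℤ) → Sp(4,ℤ/2ℤ)`. -/
def Γ₂ : Subgroup (Matrix.symplecticGroup (Fin 2) ℤ) := sred.ker


/-! ### Auxiliary machinery -/

abbrev Sp4 := Matrix.symplecticGroup (Fin 2) ℤ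
abbrev SL2 := Matrix.SpecialLinearGroup (Fin 2) ℤ

lemma symm_transpose (a b c : ℤ) : (!![a,b;b,c] : Matrix (Fin 2) (Fin 2) ℤ)ᵀ = !![a,b;b,c] := by
  ext i j; fin_cases i <;> fin_cases j <;> rfl

lemma two_zero : (!![0,0;0,0] : Matrix (Fin 2) (Fin 2) ℤ) = 0 := by
  ext i j; fin_cases i <;> fin_cases j <;> rfl

lemma LTm_mem (a b c : ℤ) :
    Matrix.fromBlocks 1 0 !![a,b;b,c] 1 ∈ Matrix.symplecticGroup (Fin 2) ℤ := by
  rw [SymplecticGroup.mem_iff]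
  unfold Matrix.J
  rw [Matrix.fromBlocks_transpose, symm_transpose]
  simp [Matrix.fromBlocks_multiply, two_zero]

lemma UTm_mem (a b c : ℤ) :
    Matrix.fromBlocks 1 !![a,b;b,c] 0 1 ∈ Matrix.symplecticGroup (Fin 2) ℤ := by
  rw [SymplecticGroup.mem_iff]
  unfold Matrix.J
  rw [Matrix.fromBlocks_transpose, symm_transpose]
  simp [Matrix.fromBlocks_multiply, two_zero]

/-- Lower unipotent symplectic matrices. -/
def Lo (a b c : ℤ) : Sp4 := ⟨Matrix.fromBlocks 1 0 !![a,b;b,c] 1, LTm_mem a b c⟩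
/-- Upper unipotent symplectic matrices. -/
def Up (a b c : ℤ) : Sp4 := ⟨Matrix.fromBlocks 1 !![a,b;b,c] 0 1, UTm_mem a b c⟩

lemma add_2x2 (a b c a' b' c' : ℤ) :
    (!![a,b;b,c] : Matrix (Fin 2) (Fin 2) ℤ) + !![a',b';b',c'] = !![a+a',b+b';b+b',c+c'] := by
  ext i j; fin_cases i <;> fin_cases j <;> simp

lemma Lo_mul (a b c a' b' c' : ℤ) : Lo a b c * Lo a' b' c' = Lo (a+a') (b+b') (c+c') := by
  apply Subtype.ext
  show Matrix.fromBlocks 1 0 !![a,b;b,c] 1 * Matrix.fromBlocks 1 0 !![a',b';b',c'] 1 = _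
  simp [Matrix.fromBlocks_multiply, Lo, add_2x2]

lemma Up_mul (a b c a' b' c' : ℤ) : Up a b c * Up a' b' c' = Up (a+a') (b+b') (c+c') := by
  apply Subtype.ext
  show Matrix.fromBlocks 1 !![a,b;b,c] 0 1 * Matrix.fromBlocks 1 !![a',b';b',c'] 0 1 = _
  simp [Matrix.fromBlocks_multiply, Up, add_2x2]; ring_nf; simp

lemma zpow_of_hom {G : Type*} [Group G] (f : ℤ → G) (h : ∀ m n, f (m+n) = f m * f n)
    (n : ℤ) : f n = (f 1)^n := by
  have h0 : f 0 = 1 := by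
    have h00 := h 0 0
    rw [add_zero] at h00
    exact mul_eq_left.mp h00.symm
  induction n using Int.induction_on with
  | zero => simpa using h0
  | succ i ih => rw [h i 1, ih]; exact (_root_.zpow_add_one _ _).symm
  | pred i ih =>
      have hinv : f (-1) = (f 1)⁻¹ := by
        have := h (-1) 1
        simp only [neg_add_cancel, h0] at this
        exact eq_inv_of_mul_eq_one_left this.symm
      rw [show (-(i:ℤ) - 1) = (-(i:ℤ)) + (-1) by ring, h, ih, hinv]
      exact (_root_.zpow_sub_one _ _).symm

lemma Lo_zero : Lo 0 0 0 = 1 := by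
  apply Subtype.ext
  show Matrix.fromBlocks 1 0 !![(0:ℤ),0;0,0] 1 = 1
  rw [two_zero, ← Matrix.fromBlocks_one]

lemma Up_zero : Up 0 0 0 = 1 := by
  apply Subtype.ext
  show Matrix.fromBlocks 1 !![(0:ℤ),0;0,0] 0 1 = 1
  rw [two_zero, ← Matrix.fromBlocks_one]

lemma Up_neg_inv (a b c : ℤ) : Up (-a) (-b) (-c) = (Up a b c)⁻¹ := by
  apply eq_inv_of_mul_eq_one_left
  rw [Up_mul]
  simpa using Up_zero

lemma Lo_neg_inv (a b c : ℤ) : Lo (-a) (-b) (-c) = (Lo a b c)⁻¹ := by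
  apply eq_inv_of_mul_eq_one_left
  rw [Lo_mul]
  simpa using Lo_zero

/-- The generating set of the five matrices. -/
def S5 : Set Sp4 := {g | (g : Matrix (Fin 2 ⊕ Fin 2) (Fin 2 ⊕ Fin 2) ℤ) = r A ∨
    (g : Matrix (Fin 2 ⊕ Fin 2) (Fin 2 ⊕ Fin 2) ℤ) = r B ∨
    (g : Matrix (Fin 2 ⊕ Fin 2) (Fin 2 ⊕ Fin 2) ℤ) = r C ∨
    (g : Matrix (Fin 2 ⊕ Fin 2) (Fin 2 ⊕ Fin 2) ℤ) = r D ∨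
    (g : Matrix (Fin 2 ⊕ Fin 2) (Fin 2 ⊕ Fin 2) ℤ) = r E}

/-- The subgroup generated by the five matrices. -/
def H : Subgroup Sp4 := Subgroup.closure S5

lemma gA_mem : Lo 1 0 0 ∈ H := Subgroup.subset_closure (Or.inl (by decide))
lemma gB_mem : Up (-1) 1 (-1) ∈ H := Subgroup.subset_closure (Or.inr (Or.inl (by decide)))
lemma gC_mem : Lo 0 0 1 ∈ H := Subgroup.subset_closure (Or.inr (Or.inr (Or.inl (by decide))))
lemma gD_mem : Up 0 0 (-1) ∈ H :=
  Subgroup.subset_closure (Or.inr (Or.inr (Or.inr (Or.inl (by decide)))))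
lemma gE_mem : Lo 1 1 1 ∈ H :=
  Subgroup.subset_closure (Or.inr (Or.inr (Or.inr (Or.inr (by decide)))))

lemma Lo_e11_zpow (n : ℤ) : Lo n 0 0 = (Lo 1 0 0) ^ n := by
  have := zpow_of_hom (fun n => Lo n 0 0) (fun m n => by simp [Lo_mul]) n
  simpa using this

lemma Lo_e22_zpow (n : ℤ) : Lo 0 0 n = (Lo 0 0 1) ^ n := by
  have := zpow_of_hom (fun n => Lo 0 0 n) (fun m n => by simp [Lo_mul]) n
  simpa using this

lemma Lo_off_zpow (n : ℤ) : Lo 0 n 0 = (Lo 0 1 0) ^ n := by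
  have := zpow_of_hom (fun n => Lo 0 n 0) (fun m n => by simp [Lo_mul]) n
  simpa using this

lemma Up_e11_zpow (n : ℤ) : Up n 0 0 = (Up 1 0 0) ^ n := by
  have := zpow_of_hom (fun n => Up n 0 0) (fun m n => by simp [Up_mul]) n
  simpa using this

lemma Up_e22_zpow (n : ℤ) : Up 0 0 n = (Up 0 0 1) ^ n := by
  have := zpow_of_hom (fun n => Up 0 0 n) (fun m n => by simp [Up_mul]) n
  simpa using this

lemma Up_off_zpow (n : ℤ) : Up 0 n 0 = (Up 0 1 0) ^ n := by
  have := zpow_of_hom (fun n => Up 0 n 0) (fun m n => by simp [Up_mul]) n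
  simpa using this

lemma hLo (a b c : ℤ) : Lo a b c ∈ H := by
  have hsplit : Lo a b c = Lo a 0 0 * Lo 0 b 0 * Lo 0 0 c := by
    rw [Lo_mul, Lo_mul]; norm_num
  have hoff : Lo 0 1 0 ∈ H := by
    have : Lo 0 1 0 = Lo (-1) 0 0 * Lo 1 1 1 * Lo 0 0 (-1) := by
      rw [Lo_mul, Lo_mul]; norm_num
    rw [this]
    exact mul_mem (mul_mem (by rw [Lo_e11_zpow]; exact zpow_mem gA_mem _) gE_mem)
      (by rw [Lo_e22_zpow]; exact zpow_mem gC_mem _)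
  rw [hsplit, Lo_e11_zpow, Lo_off_zpow, Lo_e22_zpow]
  exact mul_mem (mul_mem (zpow_mem gA_mem _) (zpow_mem hoff _)) (zpow_mem gC_mem _)

lemma Up_e11_mem : Up 1 0 0 ∈ H := by
  -- the key conjugation identity found by search:
  -- (D⬝C⬝B⬝A) ⬝ U(-e₁₁) = E ⬝ (D⬝C⬝B⬝A)
  have key : (Up 0 0 (-1) * Lo 0 0 1 * Up (-1) 1 (-1) * Lo 1 0 0) * Up (-1) 0 0
      = Lo 1 1 1 * (Up 0 0 (-1) * Lo 0 0 1 * Up (-1) 1 (-1) * Lo 1 0 0) := by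
    apply Subtype.ext
    show (Up 0 0 (-1)).1 * (Lo 0 0 1).1 * (Up (-1) 1 (-1)).1 * (Lo 1 0 0).1 * (Up (-1) 0 0).1
      = (Lo 1 1 1).1 * ((Up 0 0 (-1)).1 * (Lo 0 0 1).1 * (Up (-1) 1 (-1)).1 * (Lo 1 0 0).1)
    decide
  set W : Sp4 := Up 0 0 (-1) * Lo 0 0 1 * Up (-1) 1 (-1) * Lo 1 0 0 with hW
  have hWmem : W ∈ H := mul_mem (mul_mem (mul_mem gD_mem gC_mem) gB_mem) gA_mem
  have h1 : Up (-1) 0 0 = W⁻¹ * (Lo 1 1 1 * W) := by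
    rw [← key, inv_mul_cancel_left]
  have h2 : Up (-1) 0 0 ∈ H := by
    rw [h1]; exact mul_mem (inv_mem hWmem) (mul_mem gE_mem hWmem)
  have h3 : Up 1 0 0 = (Up (-1) 0 0)⁻¹ := by
    rw [← Up_neg_inv]; norm_num
  rw [h3]; exact inv_mem h2

lemma hUp (a b c : ℤ) : Up a b c ∈ H := by
  have he22 : Up 0 0 1 ∈ H := by
    have : Up 0 0 1 = (Up 0 0 (-1))⁻¹ := by
      rw [← Up_neg_inv]; norm_num
    rw [this]; exact inv_mem gD_mem
  have hoff : Up 0 1 0 ∈ H := by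
    have : Up 0 1 0 = Up (-1) 1 (-1) * Up 1 0 0 * Up 0 0 1 := by
      rw [Up_mul, Up_mul]; norm_num
    rw [this]
    exact mul_mem (mul_mem gB_mem Up_e11_mem) he22
  have hsplit : Up a b c = Up a 0 0 * Up 0 b 0 * Up 0 0 c := by
    rw [Up_mul, Up_mul]; norm_num
  rw [hsplit, Up_e11_zpow, Up_off_zpow, Up_e22_zpow]
  exact mul_mem (mul_mem (zpow_mem Up_e11_mem _) (zpow_mem hoff _)) (zpow_mem he22 _)


def tU : SL2 := ⟨!![1,1;0,1], by simp [Matrix.det_fin_two_of]⟩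
def tL : SL2 := ⟨!![1,0;1,1], by simp [Matrix.det_fin_two_of]⟩
def sS : SL2 := ⟨!![0,1;-1,0], by simp [Matrix.det_fin_two_of]⟩

def tUf (n : ℤ) : SL2 := ⟨!![1,n;0,1], by simp [Matrix.det_fin_two_of]⟩

lemma tU_zpow (n : ℤ) : tU ^ n = tUf n := by
  have : ∀ m n : ℤ, tUf (m+n) = tUf m * tUf n := by
    intro m n
    apply Subtype.ext
    show (!![1,m+n;0,1] : Matrix (Fin 2) (Fin 2) ℤ) = !![1,m;0,1] * !![1,n;0,1]
    ext i j; fin_cases i <;> fin_cases j <;> simp [Matrix.mul_apply, Fin.sum_univ_two] <;> ring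
  have h1 : tUf 1 = tU := rfl
  rw [← h1, ← zpow_of_hom tUf this n]

lemma sS_eq : sS = tU * tL⁻¹ * tU := by
  apply Subtype.ext
  have : (tL⁻¹ : SL2).1 = !![1,0;-1,1] := by
    rw [Matrix.SpecialLinearGroup.coe_inv]
    ext i j
    rw [Matrix.adjugate_fin_two]
    fin_cases i <;> fin_cases j <;> rfl
  show (!![0,1;-1,0] : Matrix (Fin 2) (Fin 2) ℤ) = _
  show _ = tU.1 * (tL⁻¹ : SL2).1 * tU.1
  rw [this]
  ext i j; fin_cases i <;> fin_cases j <;> simp [tU, Matrix.mul_apply, Fin.sum_univ_two]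

theorem sl2_gen (g : SL2) : g ∈ Subgroup.closure ({tU, tL} : Set SL2) := by
  set K := Subgroup.closure ({tU, tL} : Set SL2) with hK
  have htU : tU ∈ K := Subgroup.subset_closure (by simp)
  have htL : tL ∈ K := Subgroup.subset_closure (by simp)
  have hsS : sS ∈ K := by rw [sS_eq]; exact mul_mem (mul_mem htU (inv_mem htL)) htU
  generalize hn : (g.1 1 0).natAbs = n
  induction n using Nat.strong_induction_on generalizing g with
  | _ n IH =>
  rcases eq_or_ne (g.1 1 0) 0 with hc | hc
  · -- lower-left is zero
    have hdet := g.2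
    rw [Matrix.det_fin_two] at hdet
    rw [hc, mul_zero, sub_zero] at hdet
    rcases Int.mul_eq_one_iff_eq_one_or_neg_one.mp hdet with ⟨ha, hd⟩ | ⟨ha, hd⟩
    · have : g = tU ^ (g.1 0 1) := by
        rw [tU_zpow]
        apply Subtype.ext
        rw [Matrix.eta_fin_two g.1, ha, hd, hc]
        rfl
      rw [this]; exact zpow_mem htU _
    · have : g = sS * sS * tU ^ (-(g.1 0 1)) := by
        rw [tU_zpow]
        apply Subtype.ext
        show g.1 = sS.1 * sS.1 * (tUf (-(g.1 0 1))).1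
        rw [Matrix.eta_fin_two g.1, ha, hd, hc]
        ext i j; fin_cases i <;> fin_cases j <;>
          simp [sS, tUf, Matrix.mul_apply, Fin.sum_univ_two]
      rw [this]
      exact mul_mem (mul_mem hsS hsS) (zpow_mem htU _)
  · -- Euclid step
    set a := g.1 0 0 with hA
    set c := g.1 1 0 with hC
    set q := a / c with hq
    set g' := sS * tU ^ (-q) * g with hg'
    have hentry : g'.1 1 0 = -(a % c) := by
      rw [hg', tU_zpow]
      show (sS.1 * (tUf (-q)).1 * g.1) 1 0 = _
      rw [Int.emod_def]
      simp [sS, tUf, Matrix.mul_apply, Fin.sum_univ_two]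
      ring
    have hlt : (g'.1 1 0).natAbs < n := by
      rw [hentry, Int.natAbs_neg]
      have h1 : 0 ≤ a % c := Int.emod_nonneg a hc
      have h2 : a % c < |c| := by
        have := Int.emod_lt a hc; rwa [Int.natCast_natAbs] at this
      have h3 := Int.natAbs_lt_natAbs_of_nonneg_of_lt h1 h2
      rwa [Int.natAbs_abs, hn] at h3
    have hg'mem : g' ∈ K := IH _ hlt g' rfl
    have : g = (sS * tU ^ (-q))⁻¹ * g' := by rw [hg']; group
    rw [this]
    exact mul_mem (inv_mem (mul_mem hsS (zpow_mem htU _))) hg'mem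

/-! ### Embeddings of SL₂ at coordinates (1,3) and (2,4) -/

def i13m (g : Matrix (Fin 2) (Fin 2) ℤ) : Matrix (Fin 2 ⊕ Fin 2) (Fin 2 ⊕ Fin 2) ℤ :=
  Matrix.fromBlocks !![g 0 0,0;0,1] !![g 0 1,0;0,0] !![g 1 0,0;0,0] !![g 1 1,0;0,1]

def i24m (g : Matrix (Fin 2) (Fin 2) ℤ) : Matrix (Fin 2 ⊕ Fin 2) (Fin 2 ⊕ Fin 2) ℤ :=
  Matrix.fromBlocks !![1,0;0,g 0 0] !![0,0;0,g 0 1] !![0,0;0,g 1 0] !![1,0;0,g 1 1]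

lemma i13m_mem (g : SL2) : i13m g.1 ∈ Matrix.symplecticGroup (Fin 2) ℤ := by
  have hdet : g.1 0 0 * g.1 1 1 - g.1 0 1 * g.1 1 0 = 1 := by
    have := g.2; rwa [Matrix.det_fin_two] at this
  rw [SymplecticGroup.mem_iff]
  ext i j
  rcases i with i | i <;> rcases j with j | j <;> fin_cases i <;> fin_cases j <;>
    simp [i13m, Matrix.J, Matrix.mul_apply, Fintype.sum_sum_type, Fin.sum_univ_two,
      Matrix.fromBlocks] <;> linarith [hdet]

lemma i24m_mem (g : SL2) : i24m g.1 ∈ Matrix.symplecticGroup (Fin 2) ℤ := by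
  have hdet : g.1 0 0 * g.1 1 1 - g.1 0 1 * g.1 1 0 = 1 := by
    have := g.2; rwa [Matrix.det_fin_two] at this
  rw [SymplecticGroup.mem_iff]
  ext i j
  rcases i with i | i <;> rcases j with j | j <;> fin_cases i <;> fin_cases j <;>
    simp [i24m, Matrix.J, Matrix.mul_apply, Fintype.sum_sum_type, Fin.sum_univ_two,
      Matrix.fromBlocks] <;> linarith [hdet]

def i13 : SL2 →* Sp4 where
  toFun g := ⟨i13m g.1, i13m_mem g⟩
  map_one' := by
    apply Subtype.ext
    show i13m (1 : SL2).1 = 1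
    ext i j
    rcases i with i | i <;> rcases j with j | j <;> fin_cases i <;> fin_cases j <;>
      simp [i13m, Matrix.fromBlocks, Matrix.one_apply]
  map_mul' g h := by
    apply Subtype.ext
    show i13m (g * h).1 = i13m g.1 * i13m h.1
    have hc : (g * h).1 = g.1 * h.1 := rfl
    ext i j
    rcases i with i | i <;> rcases j with j | j <;> fin_cases i <;> fin_cases j <;>
      simp [hc, i13m, Matrix.fromBlocks, Matrix.mul_apply, Fintype.sum_sum_type,
        Fin.sum_univ_two]

def i24 : SL2 →* Sp4 where
  toFun g := ⟨i24m g.1, i24m_mem g⟩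
  map_one' := by
    apply Subtype.ext
    show i24m (1 : SL2).1 = 1
    ext i j
    rcases i with i | i <;> rcases j with j | j <;> fin_cases i <;> fin_cases j <;>
      simp [i24m, Matrix.fromBlocks, Matrix.one_apply]
  map_mul' g h := by
    apply Subtype.ext
    show i24m (g * h).1 = i24m g.1 * i24m h.1
    have hc : (g * h).1 = g.1 * h.1 := rfl
    ext i j
    rcases i with i | i <;> rcases j with j | j <;> fin_cases i <;> fin_cases j <;>
      simp [hc, i24m, Matrix.fromBlocks, Matrix.mul_apply, Fintype.sum_sum_type,
        Fin.sum_univ_two]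

lemma i13_tU : i13 tU = Up 1 0 0 := by
  apply Subtype.ext
  show i13m tU.1 = (Up 1 0 0).1
  decide

lemma i13_tL : i13 tL = Lo 1 0 0 := by
  apply Subtype.ext
  show i13m tL.1 = (Lo 1 0 0).1
  decide

lemma i24_tU : i24 tU = Up 0 0 1 := by
  apply Subtype.ext
  show i24m tU.1 = (Up 0 0 1).1
  decide

lemma i24_tL : i24 tL = Lo 0 0 1 := by
  apply Subtype.ext
  show i24m tL.1 = (Lo 0 0 1).1
  decide

lemma i13_mem (s : SL2) : i13 s ∈ H := by
  refine Subgroup.closure_induction ?_ ?_ ?_ ?_ (sl2_gen s)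
  · rintro x (rfl | rfl)
    · rw [i13_tU]; exact hUp 1 0 0
    · rw [i13_tL]; exact hLo 1 0 0
  · rw [_root_.map_one]; exact one_mem H
  · intro x y _ _ hx hy; rw [_root_.map_mul]; exact mul_mem hx hy
  · intro x _ hx; rw [_root_.map_inv]; exact inv_mem hx

lemma i24_mem (s : SL2) : i24 s ∈ H := by
  refine Subgroup.closure_induction ?_ ?_ ?_ ?_ (sl2_gen s)
  · rintro x (rfl | rfl)
    · rw [i24_tU]; exact hUp 0 0 1
    · rw [i24_tL]; exact hLo 0 0 1
  · rw [_root_.map_one]; exact one_mem H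
  · intro x y _ _ hx hy; rw [_root_.map_mul]; exact mul_mem hx hy
  · intro x _ hx; rw [_root_.map_inv]; exact inv_mem hx

/-! ### How the basic elements act on rows -/

lemma Lo_act (a b c : ℤ) (M : Sp4) (j : Fin 2 ⊕ Fin 2) :
    (Lo a b c * M).1 (Sum.inl 0) j = M.1 (Sum.inl 0) j ∧
    (Lo a b c * M).1 (Sum.inl 1) j = M.1 (Sum.inl 1) j ∧
    (Lo a b c * M).1 (Sum.inr 0) j
      = M.1 (Sum.inr 0) j + a * M.1 (Sum.inl 0) j + b * M.1 (Sum.inl 1) j ∧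
    (Lo a b c * M).1 (Sum.inr 1) j
      = M.1 (Sum.inr 1) j + b * M.1 (Sum.inl 0) j + c * M.1 (Sum.inl 1) j := by
  refine ⟨?_, ?_, ?_, ?_⟩ <;>
  · show ((Matrix.fromBlocks 1 0 !![a,b;b,c] 1 : Matrix (Fin 2 ⊕ Fin 2) (Fin 2 ⊕ Fin 2) ℤ)
        * M.1) _ j = _
    simp [Matrix.mul_apply, Fintype.sum_sum_type, Fin.sum_univ_two, Matrix.fromBlocks,
      Matrix.one_apply]
    try ring

lemma Up_act (a b c : ℤ) (M : Sp4) (j : Fin 2 ⊕ Fin 2) :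
    (Up a b c * M).1 (Sum.inl 0) j
      = M.1 (Sum.inl 0) j + a * M.1 (Sum.inr 0) j + b * M.1 (Sum.inr 1) j ∧
    (Up a b c * M).1 (Sum.inl 1) j
      = M.1 (Sum.inl 1) j + b * M.1 (Sum.inr 0) j + c * M.1 (Sum.inr 1) j ∧
    (Up a b c * M).1 (Sum.inr 0) j = M.1 (Sum.inr 0) j ∧
    (Up a b c * M).1 (Sum.inr 1) j = M.1 (Sum.inr 1) j := by
  refine ⟨?_, ?_, ?_, ?_⟩ <;>
  · show ((Matrix.fromBlocks 1 !![a,b;b,c] 0 1 : Matrix (Fin 2 ⊕ Fin 2) (Fin 2 ⊕ Fin 2) ℤ)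
        * M.1) _ j = _
    simp [Matrix.mul_apply, Fintype.sum_sum_type, Fin.sum_univ_two, Matrix.fromBlocks,
      Matrix.one_apply]
    try ring

lemma i13_act (s : SL2) (M : Sp4) (j : Fin 2 ⊕ Fin 2) :
    (i13 s * M).1 (Sum.inl 0) j
      = s.1 0 0 * M.1 (Sum.inl 0) j + s.1 0 1 * M.1 (Sum.inr 0) j ∧
    (i13 s * M).1 (Sum.inl 1) j = M.1 (Sum.inl 1) j ∧
    (i13 s * M).1 (Sum.inr 0) j
      = s.1 1 0 * M.1 (Sum.inl 0) j + s.1 1 1 * M.1 (Sum.inr 0) j ∧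
    (i13 s * M).1 (Sum.inr 1) j = M.1 (Sum.inr 1) j := by
  refine ⟨?_, ?_, ?_, ?_⟩ <;>
  · show (i13m s.1 * M.1) _ j = _
    simp [i13m, Matrix.mul_apply, Fintype.sum_sum_type, Fin.sum_univ_two, Matrix.fromBlocks]

lemma i24_act (s : SL2) (M : Sp4) (j : Fin 2 ⊕ Fin 2) :
    (i24 s * M).1 (Sum.inl 0) j = M.1 (Sum.inl 0) j ∧
    (i24 s * M).1 (Sum.inl 1) j
      = s.1 0 0 * M.1 (Sum.inl 1) j + s.1 0 1 * M.1 (Sum.inr 1) j ∧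
    (i24 s * M).1 (Sum.inr 0) j = M.1 (Sum.inr 0) j ∧
    (i24 s * M).1 (Sum.inr 1) j
      = s.1 1 0 * M.1 (Sum.inl 1) j + s.1 1 1 * M.1 (Sum.inr 1) j := by
  refine ⟨?_, ?_, ?_, ?_⟩ <;>
  · show (i24m s.1 * M.1) _ j = _
    simp [i24m, Matrix.mul_apply, Fintype.sum_sum_type, Fin.sum_univ_two, Matrix.fromBlocks]

/-! ### Bezout-type lemmas -/

lemma bez1 (a c : ℤ) : ∃ s : SL2, s.1 1 0 * a + s.1 1 1 * c = 0 := by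
  rcases eq_or_ne (Int.gcd a c) 0 with h0 | h0
  · obtain ⟨ha, hc⟩ := Int.gcd_eq_zero_iff.mp h0
    exact ⟨1, by simp [ha, hc]⟩
  · obtain ⟨a₀, ha⟩ : ((Int.gcd a c : ℤ)) ∣ a := Int.gcd_dvd_left a c
    obtain ⟨c₀, hc⟩ : ((Int.gcd a c : ℤ)) ∣ c := Int.gcd_dvd_right a c
    have hbez := Int.gcd_eq_gcd_ab a c
    set u := Int.gcdA a c
    set v := Int.gcdB a c
    have hg0 : ((Int.gcd a c : ℤ)) ≠ 0 := by exact_mod_cast h0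
    have hone : u * a₀ + v * c₀ = 1 := by
      have h2 : (Int.gcd a c : ℤ) * (u * a₀ + v * c₀) = (Int.gcd a c : ℤ) * 1 := by
        rw [mul_one]
        calc (Int.gcd a c : ℤ) * (u * a₀ + v * c₀)
            = a * u + c * v := by linear_combination (-u) * ha + (-v) * hc
          _ = (Int.gcd a c : ℤ) := by linarith [hbez]
      exact mul_left_cancel₀ hg0 h2
    refine ⟨⟨!![u, v; -c₀, a₀], by rw [Matrix.det_fin_two_of]; linarith⟩, ?_⟩
    show !![u, v; -c₀, a₀] 1 0 * a + !![u, v; -c₀, a₀] 1 1 * c = 0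
    simp
    linear_combination (-c₀) * ha + a₀ * hc

lemma bez2 (a b u v : ℤ) (h : u * a + v * b = 1) :
    ∃ s : SL2, s.1 0 0 * a + s.1 0 1 * b = 1 ∧ s.1 1 0 * a + s.1 1 1 * b = 0 := by
  refine ⟨⟨!![u, v; -b, a], by rw [Matrix.det_fin_two_of]; linarith⟩, ?_, ?_⟩
  · show !![u, v; -b, a] 0 0 * a + !![u, v; -b, a] 0 1 * b = 1
    simp
    linarith
  · show !![u, v; -b, a] 1 0 * a + !![u, v; -b, a] 1 1 * b = 0
    simp
    ring

lemma prim (M : Sp4) (h3 : M.1 (Sum.inr 0) (Sum.inl 0) = 0)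
    (h4 : M.1 (Sum.inr 1) (Sum.inl 0) = 0) :
    ∃ u v : ℤ, u * M.1 (Sum.inl 0) (Sum.inl 0) + v * M.1 (Sum.inl 1) (Sum.inl 0) = 1 := by
  have hinv : (M⁻¹ : Sp4).1 * M.1 = (1 : Matrix (Fin 2 ⊕ Fin 2) (Fin 2 ⊕ Fin 2) ℤ) :=
    congrArg Subtype.val (inv_mul_cancel M)
  have h := congrFun (congrFun hinv (Sum.inl 0)) (Sum.inl 0)
  rw [Matrix.mul_apply] at h
  rw [Fintype.sum_sum_type] at h
  simp only [Fin.sum_univ_two, h3, h4, mul_zero, add_zero, Matrix.one_apply_eq] at h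
  exact ⟨(M⁻¹ : Sp4).1 (Sum.inl 0) (Sum.inl 0), (M⁻¹ : Sp4).1 (Sum.inl 0) (Sum.inl 1), h⟩

/-! ### The symplectic relations between the columns -/

lemma sympl_rel (M : Sp4) (i j : Fin 2 ⊕ Fin 2) :
    M.1 (Sum.inr 0) i * M.1 (Sum.inl 0) j + M.1 (Sum.inr 1) i * M.1 (Sum.inl 1) j
      - M.1 (Sum.inl 0) i * M.1 (Sum.inr 0) j - M.1 (Sum.inl 1) i * M.1 (Sum.inr 1) j
      = (Matrix.J (Fin 2) ℤ) i j := by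
  have hs := (SymplecticGroup.mem_iff').mp M.2
  have h := congrFun (congrFun hs i) j
  simp only [Matrix.mul_apply, Matrix.transpose_apply, Fintype.sum_sum_type,
    Fin.sum_univ_two, Matrix.J, Matrix.fromBlocks_apply₁₁, Matrix.fromBlocks_apply₁₂,
    Matrix.fromBlocks_apply₂₁, Matrix.fromBlocks_apply₂₂, Matrix.neg_apply,
    Matrix.one_apply, Matrix.zero_apply] at h
  norm_num at h
  simp only [Matrix.J]
  linarith [h]

/-! ### Step 1: make the first column equal to e₁ -/

lemma step1 (M : Sp4) : ∃ h : Sp4, h ∈ H ∧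
    (h * M).1 (Sum.inl 0) (Sum.inl 0) = 1 ∧ (h * M).1 (Sum.inl 1) (Sum.inl 0) = 0 ∧
    (h * M).1 (Sum.inr 0) (Sum.inl 0) = 0 ∧ (h * M).1 (Sum.inr 1) (Sum.inl 0) = 0 := by
  obtain ⟨s₁, hs₁⟩ := bez1 (M.1 (Sum.inl 0) (Sum.inl 0)) (M.1 (Sum.inr 0) (Sum.inl 0))
  set M₁ := i13 s₁ * M with hM₁
  have c₁ := i13_act s₁ M (Sum.inl 0)
  rw [← hM₁] at c₁
  have e₁3 : M₁.1 (Sum.inr 0) (Sum.inl 0) = 0 := c₁.2.2.1.trans hs₁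
  obtain ⟨s₂, hs₂⟩ := bez1 (M₁.1 (Sum.inl 1) (Sum.inl 0)) (M₁.1 (Sum.inr 1) (Sum.inl 0))
  set M₂ := i24 s₂ * M₁ with hM₂
  have c₂ := i24_act s₂ M₁ (Sum.inl 0)
  rw [← hM₂] at c₂
  have e₂4 : M₂.1 (Sum.inr 1) (Sum.inl 0) = 0 := c₂.2.2.2.trans hs₂
  have e₂3 : M₂.1 (Sum.inr 0) (Sum.inl 0) = 0 := c₂.2.2.1.trans e₁3
  obtain ⟨u, v, huv⟩ := prim M₂ e₂3 e₂4
  obtain ⟨a, ha⟩ : ∃ x, M₂.1 (Sum.inl 0) (Sum.inl 0) = x := ⟨_, rfl⟩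
  obtain ⟨b, hb⟩ : ∃ x, M₂.1 (Sum.inl 1) (Sum.inl 0) = x := ⟨_, rfl⟩
  rw [ha, hb] at huv
  set M₃ := Lo 0 1 0 * M₂ with hM₃
  have c₃ := Lo_act 0 1 0 M₂ (Sum.inl 0)
  rw [← hM₃] at c₃
  have e₃1 : M₃.1 (Sum.inl 0) (Sum.inl 0) = a := c₃.1.trans ha
  have e₃2 : M₃.1 (Sum.inl 1) (Sum.inl 0) = b := c₃.2.1.trans hb
  have e₃3 : M₃.1 (Sum.inr 0) (Sum.inl 0) = b := by
    rw [c₃.2.2.1, e₂3, ha, hb]; ring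
  have e₃4 : M₃.1 (Sum.inr 1) (Sum.inl 0) = a := by
    rw [c₃.2.2.2, e₂4, ha, hb]; ring
  obtain ⟨s₃, hs₃1, hs₃0⟩ := bez2 a b u v huv
  set M₄ := i13 s₃ * M₃ with hM₄
  have c₄ := i13_act s₃ M₃ (Sum.inl 0)
  rw [← hM₄] at c₄
  have e₄1 : M₄.1 (Sum.inl 0) (Sum.inl 0) = 1 := by rw [c₄.1, e₃1, e₃3]; exact hs₃1
  have e₄2 : M₄.1 (Sum.inl 1) (Sum.inl 0) = b := c₄.2.1.trans e₃2
  have e₄3 : M₄.1 (Sum.inr 0) (Sum.inl 0) = 0 := by rw [c₄.2.2.1, e₃1, e₃3]; exact hs₃0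
  have e₄4 : M₄.1 (Sum.inr 1) (Sum.inl 0) = a := c₄.2.2.2.trans e₃4
  set M₅ := Lo (a*b) (-a) 0 * M₄ with hM₅
  have c₅ := Lo_act (a*b) (-a) 0 M₄ (Sum.inl 0)
  rw [← hM₅] at c₅
  have e₅1 : M₅.1 (Sum.inl 0) (Sum.inl 0) = 1 := c₅.1.trans e₄1
  have e₅2 : M₅.1 (Sum.inl 1) (Sum.inl 0) = b := c₅.2.1.trans e₄2
  have e₅3 : M₅.1 (Sum.inr 0) (Sum.inl 0) = 0 := by
    rw [c₅.2.2.1, e₄1, e₄2, e₄3]; ring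
  have e₅4 : M₅.1 (Sum.inr 1) (Sum.inl 0) = 0 := by
    rw [c₅.2.2.2, e₄1, e₄2, e₄4]; ring
  set M₆ := i24 sS * M₅ with hM₆
  have c₆ := i24_act sS M₅ (Sum.inl 0)
  rw [← hM₆] at c₆
  have hsS00 : sS.1 0 0 = 0 := rfl
  have hsS01 : sS.1 0 1 = 1 := rfl
  have hsS10 : sS.1 1 0 = -1 := rfl
  have hsS11 : sS.1 1 1 = 0 := rfl
  have e₆1 : M₆.1 (Sum.inl 0) (Sum.inl 0) = 1 := c₆.1.trans e₅1
  have e₆2 : M₆.1 (Sum.inl 1) (Sum.inl 0) = 0 := by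
    rw [c₆.2.1, e₅2, e₅4, hsS00, hsS01]; ring
  have e₆3 : M₆.1 (Sum.inr 0) (Sum.inl 0) = 0 := c₆.2.2.1.trans e₅3
  have e₆4 : M₆.1 (Sum.inr 1) (Sum.inl 0) = -b := by
    rw [c₆.2.2.2, e₅2, e₅4, hsS10, hsS11]; ring
  set M₇ := Lo 0 b 0 * M₆ with hM₇
  have c₇ := Lo_act 0 b 0 M₆ (Sum.inl 0)
  rw [← hM₇] at c₇
  have e₇1 : M₇.1 (Sum.inl 0) (Sum.inl 0) = 1 := c₇.1.trans e₆1
  have e₇2 : M₇.1 (Sum.inl 1) (Sum.inl 0) = 0 := c₇.2.1.trans e₆2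
  have e₇3 : M₇.1 (Sum.inr 0) (Sum.inl 0) = 0 := by
    rw [c₇.2.2.1, e₆1, e₆2, e₆3]; ring
  have e₇4 : M₇.1 (Sum.inr 1) (Sum.inl 0) = 0 := by
    rw [c₇.2.2.2, e₆1, e₆2, e₆4]; ring
  have hprod : (Lo 0 b 0 * i24 sS * Lo (a*b) (-a) 0 * i13 s₃ * Lo 0 1 0 * i24 s₂ * i13 s₁) * M
      = M₇ := by
    rw [hM₇, hM₆, hM₅, hM₄, hM₃, hM₂, hM₁]
    simp only [mul_assoc]
  refine ⟨_, ?_, by rw [hprod]; exact e₇1, by rw [hprod]; exact e₇2,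
    by rw [hprod]; exact e₇3, by rw [hprod]; exact e₇4⟩
  exact mul_mem (mul_mem (mul_mem (mul_mem (mul_mem (mul_mem (hLo 0 b 0) (i24_mem sS))
    (hLo (a*b) (-a) 0)) (i13_mem s₃)) (hLo 0 1 0)) (i24_mem s₂)) (i13_mem s₁)

/-! ### Step 2: keep e₁ and make the third column equal to e₃ -/

lemma step2 (M : Sp4) (e1 : M.1 (Sum.inl 0) (Sum.inl 0) = 1)
    (e2 : M.1 (Sum.inl 1) (Sum.inl 0) = 0) (e3 : M.1 (Sum.inr 0) (Sum.inl 0) = 0)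
    (e4 : M.1 (Sum.inr 1) (Sum.inl 0) = 0) :
    ∃ h : Sp4, h ∈ H ∧
    (h * M).1 (Sum.inl 0) (Sum.inl 0) = 1 ∧ (h * M).1 (Sum.inl 1) (Sum.inl 0) = 0 ∧
    (h * M).1 (Sum.inr 0) (Sum.inl 0) = 0 ∧ (h * M).1 (Sum.inr 1) (Sum.inl 0) = 0 ∧
    (h * M).1 (Sum.inl 0) (Sum.inr 0) = 0 ∧ (h * M).1 (Sum.inl 1) (Sum.inr 0) = 0 ∧
    (h * M).1 (Sum.inr 0) (Sum.inr 0) = 1 ∧ (h * M).1 (Sum.inr 1) (Sum.inr 0) = 0 := by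
  obtain ⟨p, hp⟩ : ∃ x, M.1 (Sum.inl 0) (Sum.inr 0) = x := ⟨_, rfl⟩
  obtain ⟨q, hq⟩ : ∃ x, M.1 (Sum.inl 1) (Sum.inr 0) = x := ⟨_, rfl⟩
  obtain ⟨t, ht⟩ : ∃ x, M.1 (Sum.inr 1) (Sum.inr 0) = x := ⟨_, rfl⟩
  have hw := sympl_rel M (Sum.inl 0) (Sum.inr 0)
  rw [e1, e2, e3, e4] at hw
  simp [Matrix.J, Matrix.fromBlocks, Matrix.one_apply] at hw
  -- hw : M.1 (inr 0) (inr 0) = 1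
  set M₁ := Up (-p + q*t) (-q) 0 * M with hM₁
  have c₁ := Up_act (-p + q*t) (-q) 0 M (Sum.inl 0)
  have d₁ := Up_act (-p + q*t) (-q) 0 M (Sum.inr 0)
  rw [← hM₁] at c₁ d₁
  have f₁1 : M₁.1 (Sum.inl 0) (Sum.inl 0) = 1 := by rw [c₁.1, e1, e3, e4]; ring
  have f₁2 : M₁.1 (Sum.inl 1) (Sum.inl 0) = 0 := by rw [c₁.2.1, e2, e3, e4]; ring
  have f₁3 : M₁.1 (Sum.inr 0) (Sum.inl 0) = 0 := c₁.2.2.1.trans e3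
  have f₁4 : M₁.1 (Sum.inr 1) (Sum.inl 0) = 0 := c₁.2.2.2.trans e4
  have g₁1 : M₁.1 (Sum.inl 0) (Sum.inr 0) = 0 := by rw [d₁.1, hp, hw, ht]; ring
  have g₁2 : M₁.1 (Sum.inl 1) (Sum.inr 0) = 0 := by rw [d₁.2.1, hq, hw, ht]; ring
  have g₁3 : M₁.1 (Sum.inr 0) (Sum.inr 0) = 1 := d₁.2.2.1.trans hw
  have g₁4 : M₁.1 (Sum.inr 1) (Sum.inr 0) = t := d₁.2.2.2.trans ht
  have hsS00 : sS.1 0 0 = 0 := rfl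
  have hsS01 : sS.1 0 1 = 1 := rfl
  have hsS10 : sS.1 1 0 = -1 := rfl
  have hsS11 : sS.1 1 1 = 0 := rfl
  set M₂ := i24 sS * M₁ with hM₂
  have c₂ := i24_act sS M₁ (Sum.inl 0)
  have d₂ := i24_act sS M₁ (Sum.inr 0)
  rw [← hM₂] at c₂ d₂
  have f₂1 : M₂.1 (Sum.inl 0) (Sum.inl 0) = 1 := c₂.1.trans f₁1
  have f₂2 : M₂.1 (Sum.inl 1) (Sum.inl 0) = 0 := by
    rw [c₂.2.1, f₁2, f₁4, hsS00, hsS01]; ring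
  have f₂3 : M₂.1 (Sum.inr 0) (Sum.inl 0) = 0 := c₂.2.2.1.trans f₁3
  have f₂4 : M₂.1 (Sum.inr 1) (Sum.inl 0) = 0 := by
    rw [c₂.2.2.2, f₁2, f₁4, hsS10, hsS11]; ring
  have g₂1 : M₂.1 (Sum.inl 0) (Sum.inr 0) = 0 := d₂.1.trans g₁1
  have g₂2 : M₂.1 (Sum.inl 1) (Sum.inr 0) = t := by
    rw [d₂.2.1, g₁2, g₁4, hsS00, hsS01]; ring
  have g₂3 : M₂.1 (Sum.inr 0) (Sum.inr 0) = 1 := d₂.2.2.1.trans g₁3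
  have g₂4 : M₂.1 (Sum.inr 1) (Sum.inr 0) = 0 := by
    rw [d₂.2.2.2, g₁2, g₁4, hsS10, hsS11]; ring
  set M₃ := Up 0 (-t) 0 * M₂ with hM₃
  have c₃ := Up_act 0 (-t) 0 M₂ (Sum.inl 0)
  have d₃ := Up_act 0 (-t) 0 M₂ (Sum.inr 0)
  rw [← hM₃] at c₃ d₃
  have f₃1 : M₃.1 (Sum.inl 0) (Sum.inl 0) = 1 := by rw [c₃.1, f₂1, f₂3, f₂4]; ring
  have f₃2 : M₃.1 (Sum.inl 1) (Sum.inl 0) = 0 := by rw [c₃.2.1, f₂2, f₂3, f₂4]; ring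
  have f₃3 : M₃.1 (Sum.inr 0) (Sum.inl 0) = 0 := c₃.2.2.1.trans f₂3
  have f₃4 : M₃.1 (Sum.inr 1) (Sum.inl 0) = 0 := c₃.2.2.2.trans f₂4
  have g₃1 : M₃.1 (Sum.inl 0) (Sum.inr 0) = 0 := by rw [d₃.1, g₂1, g₂3, g₂4]; ring
  have g₃2 : M₃.1 (Sum.inl 1) (Sum.inr 0) = 0 := by rw [d₃.2.1, g₂2, g₂3, g₂4]; ring
  have g₃3 : M₃.1 (Sum.inr 0) (Sum.inr 0) = 1 := d₃.2.2.1.trans g₂3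
  have g₃4 : M₃.1 (Sum.inr 1) (Sum.inr 0) = 0 := d₃.2.2.2.trans g₂4
  have hprod : (Up 0 (-t) 0 * i24 sS * Up (-p + q*t) (-q) 0) * M = M₃ := by
    rw [hM₃, hM₂, hM₁]
    simp only [mul_assoc]
  exact ⟨_, mul_mem (mul_mem (hUp 0 (-t) 0) (i24_mem sS)) (hUp (-p + q*t) (-q) 0),
    by rw [hprod]; exact f₃1, by rw [hprod]; exact f₃2, by rw [hprod]; exact f₃3,
    by rw [hprod]; exact f₃4, by rw [hprod]; exact g₃1, by rw [hprod]; exact g₃2,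
    by rw [hprod]; exact g₃3, by rw [hprod]; exact g₃4⟩

/-! ### Step 3: a symplectic matrix fixing e₁ and e₃ lies in the embedded SL₂ -/

lemma step3 (M : Sp4) (e1 : M.1 (Sum.inl 0) (Sum.inl 0) = 1)
    (e2 : M.1 (Sum.inl 1) (Sum.inl 0) = 0) (e3 : M.1 (Sum.inr 0) (Sum.inl 0) = 0)
    (e4 : M.1 (Sum.inr 1) (Sum.inl 0) = 0)
    (f1 : M.1 (Sum.inl 0) (Sum.inr 0) = 0) (f2 : M.1 (Sum.inl 1) (Sum.inr 0) = 0)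
    (f3 : M.1 (Sum.inr 0) (Sum.inr 0) = 1) (f4 : M.1 (Sum.inr 1) (Sum.inr 0) = 0) :
    M ∈ H := by
  have hv2 : M.1 (Sum.inr 0) (Sum.inl 1) = 0 := by
    have h := sympl_rel M (Sum.inl 0) (Sum.inl 1)
    rw [e1, e2, e3, e4] at h
    simp [Matrix.J, Matrix.fromBlocks, Matrix.one_apply] at h
    linarith
  have hv1 : M.1 (Sum.inl 0) (Sum.inl 1) = 0 := by
    have h := sympl_rel M (Sum.inr 0) (Sum.inl 1)
    rw [f1, f2, f3, f4] at h
    simp [Matrix.J, Matrix.fromBlocks, Matrix.one_apply] at h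
    linarith
  have hv4 : M.1 (Sum.inr 0) (Sum.inr 1) = 0 := by
    have h := sympl_rel M (Sum.inl 0) (Sum.inr 1)
    rw [e1, e2, e3, e4] at h
    simp [Matrix.J, Matrix.fromBlocks, Matrix.one_apply] at h
    linarith
  have hv3 : M.1 (Sum.inl 0) (Sum.inr 1) = 0 := by
    have h := sympl_rel M (Sum.inr 0) (Sum.inr 1)
    rw [f1, f2, f3, f4] at h
    simp [Matrix.J, Matrix.fromBlocks, Matrix.one_apply] at h
    linarith
  have hdet : M.1 (Sum.inl 1) (Sum.inl 1) * M.1 (Sum.inr 1) (Sum.inr 1)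
      - M.1 (Sum.inl 1) (Sum.inr 1) * M.1 (Sum.inr 1) (Sum.inl 1) = 1 := by
    have h := sympl_rel M (Sum.inl 1) (Sum.inr 1)
    rw [hv1, hv2, hv3, hv4] at h
    simp [Matrix.J, Matrix.fromBlocks, Matrix.one_apply] at h
    linarith
  set g : SL2 := ⟨!![M.1 (Sum.inl 1) (Sum.inl 1), M.1 (Sum.inl 1) (Sum.inr 1);
      M.1 (Sum.inr 1) (Sum.inl 1), M.1 (Sum.inr 1) (Sum.inr 1)],
    by rw [Matrix.det_fin_two_of]; linarith⟩ with hg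
  have hMg : M = i24 g := by
    apply Subtype.ext
    show M.1 = i24m g.1
    ext i j
    rcases i with i | i <;> rcases j with j | j <;> fin_cases i <;> fin_cases j <;>
      simp [i24m, Matrix.fromBlocks, hg, e1, e2, e3, e4, f1, f2, f3, f4,
        hv1, hv2, hv3, hv4]
  rw [hMg]
  exact i24_mem g

/-! ### Main result -/

lemma all_mem (M : Sp4) : M ∈ H := by
  obtain ⟨h₁, hh₁, a1, a2, a3, a4⟩ := step1 M
  obtain ⟨h₂, hh₂, b1, b2, b3, b4, b5, b6, b7, b8⟩ := step2 (h₁ * M) a1 a2 a3 a4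
  have h3 := step3 (h₂ * (h₁ * M)) b1 b2 b3 b4 b5 b6 b7 b8
  have hM : M = h₁⁻¹ * (h₂⁻¹ * (h₂ * (h₁ * M))) := by group
  rw [hM]
  exact mul_mem (inv_mem hh₁) (mul_mem (inv_mem hh₂) h3)

/-- The five matrices `A`, `B`, `C`, `D`, `E` generate the full symplectic group `Sp(4,ℤ)`. -/
theorem five_matrices_generate :
    Subgroup.closure {g : Matrix.symplecticGroup (Fin 2) ℤ |
        (g : Matrix (Fin 2 ⊕ Fin 2) (Fin 2 ⊕ Fin 2) ℤ) = r A ∨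
        (g : Matrix (Fin 2 ⊕ Fin 2) (Fin 2 ⊕ Fin 2) ℤ) = r B ∨
        (g : Matrix (Fin 2 ⊕ Fin 2) (Fin 2 ⊕ Fin 2) ℤ) = r C ∨
        (g : Matrix (Fin 2 ⊕ Fin 2) (Fin 2 ⊕ Fin 2) ℤ) = r D ∨
        (g : Matrix (Fin 2 ⊕ Fin 2) (Fin 2 ⊕ Fin 2) ℤ) = r E} = ⊤ := by
  rw [eq_top_iff]
  rintro M -
  exact all_mem M

end GenusTwo
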